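/- Let $\beta, \delta \in \mathbb{C}$ and let $y$ be holomorphic in a neighborhood of $x = 0$ with $y(0) = a$ where $a \notin \{0, 1\}$, and suppose $y$ solves the Painlevé VI equation with parameters $(0, \beta, 0, \delta)$ on a punctured neighborhood of $0$ (where $y(x) \neq 0, 1, x$). Then $y'(0) = (1-a)(\delta - \beta)$. -/

import Mathlib

def PVI (a b c d : ℂ) (y : ℂ → ℂ) (x : ℂ) : Prop :=
  deriv (deriv y) x =
    (1/2) * (1/(y x) + 1/(y x - 1) + 1/(y x - x)) * (deriv y x)^2
    - (1/x + 1/(x - 1) + 1/(y x - x)) * deriv y x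
    + (y x * (y x - 1) * (y x - x)) / (x^2 * (x - 1)^2) *
      (a + b * x / (y x)^2 + c * (x - 1) / (y x - 1)^2 + d * (x * (x - 1)) / (y x - x)^2)

lemma analyticAt_deriv {f : ℂ → ℂ} {x : ℂ} (h : AnalyticAt ℂ f x) :
    AnalyticAt ℂ (deriv f) x := by
  obtain ⟨s, hs, h⟩ := h.exists_mem_nhds_analyticOnNhd
  exact h.deriv x (mem_of_mem_nhds hs)

set_option maxHeartbeats 8000000 in
theorem taylor_solution_first_coefficient (β δ a : ℂ) (y : ℂ → ℂ)
    (ha0 : a ≠ 0) (ha1 : a ≠ 1)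
    (hy : AnalyticAt ℂ y 0) (h0 : y 0 = a)
    (hsol : ∀ᶠ x in nhdsWithin 0 {(0 : ℂ)}ᶜ,
      x ≠ 1 ∧ y x ≠ 0 ∧ y x ≠ 1 ∧ y x ≠ x ∧ PVI 0 β 0 δ y x) :
    deriv y 0 = (1 - a) * (δ - β) := by
  have hc : ContinuousAt y 0 := hy.continuousAt
  have hc1 : ContinuousAt (deriv y) 0 := (analyticAt_deriv hy).continuousAt
  have hc2 : ContinuousAt (deriv (deriv y)) 0 := (analyticAt_deriv (analyticAt_deriv hy)).continuousAt
  set G : ℂ → ℂ := fun x =>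
    x*(1/2)*(1/(y x)+1/(y x - 1)+1/(y x - x))*(deriv y x)^2
    - (1 + x/(x-1) + x/(y x - x))*(deriv y x)
    + β * (y x*(y x - 1)*(y x - x))/((x-1)^2*(y x)^2)
    + δ * (y x*(y x - 1))/((x-1)*(y x - x)) with hGdef
  have h1 : y 0 ≠ 0 := by simp [h0, ha0]
  have h2 : y 0 - 1 ≠ 0 := by rw [h0]; exact sub_ne_zero.2 ha1
  have h3 : y 0 - 0 ≠ 0 := by simpa [h0]
  have h4 : (0:ℂ) - 1 ≠ 0 := by norm_num
  have h5 : ((0:ℂ) - 1) ^ 2 * (y 0) ^ 2 ≠ 0 :=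
    mul_ne_zero (pow_ne_zero 2 h4) (pow_ne_zero 2 h1)
  have h6 : ((0:ℂ) - 1) * (y 0 - 0) ≠ 0 := mul_ne_zero h4 h3
  have hGc : ContinuousAt G 0 := by
    rw [hGdef]
    have cid : ContinuousAt (fun x : ℂ => x) 0 := continuousAt_id
    have c1 : ContinuousAt (fun x => 1 / y x) 0 := continuousAt_const.div hc h1
    have c2 : ContinuousAt (fun x => 1 / (y x - 1)) 0 :=
      continuousAt_const.div (hc.sub continuousAt_const) h2
    have c3 : ContinuousAt (fun x => 1 / (y x - x)) 0 :=
      continuousAt_const.div (hc.sub cid) h3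
    have t1 : ContinuousAt (fun x => x * (1/2) * (1/(y x) + 1/(y x - 1) + 1/(y x - x))
        * (deriv y x) ^ 2) 0 :=
      ((cid.mul continuousAt_const).mul ((c1.add c2).add c3)).mul (hc1.pow 2)
    have cx1 : ContinuousAt (fun x : ℂ => x / (x - 1)) 0 :=
      cid.div (cid.sub continuousAt_const) h4
    have cx2 : ContinuousAt (fun x => x / (y x - x)) 0 := cid.div (hc.sub cid) h3
    have t2 : ContinuousAt (fun x => (1 + x/(x-1) + x/(y x - x)) * deriv y x) 0 :=
      ((continuousAt_const.add cx1).add cx2).mul hc1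
    have t3 : ContinuousAt (fun x => β * (y x * (y x - 1) * (y x - x))
        / ((x-1)^2 * (y x)^2)) 0 :=
      (continuousAt_const.mul ((hc.mul (hc.sub continuousAt_const)).mul (hc.sub cid))).div
        (((cid.sub continuousAt_const).pow 2).mul (hc.pow 2)) h5
    have t4 : ContinuousAt (fun x => δ * (y x * (y x - 1)) / ((x-1) * (y x - x))) 0 :=
      (continuousAt_const.mul (hc.mul (hc.sub continuousAt_const))).div
        ((cid.sub continuousAt_const).mul (hc.sub cid)) h6
    exact ((t1.sub t2).add t3).add t4
  have ht1 : Filter.Tendsto G (nhdsWithin 0 {(0:ℂ)}ᶜ) (nhds (G 0)) :=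
    hGc.tendsto.mono_left nhdsWithin_le_nhds
  have ht2 : Filter.Tendsto (fun x => x * deriv (deriv y) x) (nhdsWithin 0 {(0:ℂ)}ᶜ)
      (nhds 0) := by
    have := (continuousAt_id.mul hc2).tendsto.mono_left
      (nhdsWithin_le_nhds (s := {(0:ℂ)}ᶜ))
    convert this using 2 <;> simp [Pi.mul_apply]
  have heq : ∀ᶠ x in nhdsWithin 0 {(0:ℂ)}ᶜ, x * deriv (deriv y) x = G x := by
    filter_upwards [hsol, self_mem_nhdsWithin] with x hx hx0
    obtain ⟨hx1, hy0, hy1, hyx, hpvi⟩ := hx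
    have hx0 : x ≠ 0 := hx0
    have e1 : x - 1 ≠ 0 := sub_ne_zero.2 hx1
    have e2 : y x - 1 ≠ 0 := sub_ne_zero.2 hy1
    have e3 : y x - x ≠ 0 := sub_ne_zero.2 hyx
    unfold PVI at hpvi
    rw [hpvi, hGdef]
    beta_reduce
    have hB : x * (1/x + 1/(x-1) + 1/(y x - x)) = 1 + x/(x-1) + x/(y x - x) := by
      field_simp
    have hC : x * ((y x * (y x - 1) * (y x - x)) / (x^2 * (x - 1)^2) *
        ((0:ℂ) + β * x / (y x)^2 + 0 * (x - 1) / (y x - 1)^2 + δ * (x * (x - 1)) / (y x - x)^2))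
        = β * (y x * (y x - 1) * (y x - x)) / ((x-1)^2 * (y x)^2)
          + δ * (y x * (y x - 1)) / ((x-1) * (y x - x)) := by
      field_simp
      ring
    linear_combination (-(deriv y x)) * hB + hC
  have hG0 : G 0 = 0 := tendsto_nhds_unique ht1 (ht2.congr' heq)
  rw [hGdef] at hG0
  simp only [h0, sub_zero] at hG0
  have e1 : β * (a * (a - 1) * a) / (((0:ℂ) - 1) ^ 2 * a ^ 2) = β * (a - 1) := by
    rw [div_eq_iff (by simp [ha0])]
    ring
  have e2 : δ * (a * (a - 1)) / (((0:ℂ) - 1) * a) = δ * (1 - a) := by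
    rw [div_eq_iff (by simp [ha0])]
    ring
  linear_combination e1 + e2 - hG0
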